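/- For z > 0 and real ν not an integer: J_{ν+3}(z) J_{-ν}(z) + J_{-(ν+3)}(z) J_ν(z) = 2(z² - 4(ν+1)(ν+2)) sin(νπ)/(π z³). -/

import Mathlib

open Real

/-- The Bessel function of the first kind,
`J_μ(z) = ∑_{n≥0} (-1)^n (z/2)^{2n+μ} / (n! Γ(n+μ+1))`. -/
noncomputable def besselJ (μ z : ℝ) : ℝ :=
  ∑' n : ℕ, (-1 : ℝ) ^ n * (z / 2) ^ (2 * (n : ℝ) + μ) /
    ((n.factorial : ℝ) * Real.Gamma ((n : ℝ) + μ + 1))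

lemma invGamma_rec (x : ℝ) : (Real.Gamma x)⁻¹ = x * (Real.Gamma (x+1))⁻¹ := by
  rcases eq_or_ne x 0 with h | h
  · simp [h, Real.Gamma_zero]
  rcases eq_or_ne (Real.Gamma x) 0 with hg | hg
  · obtain ⟨m, hm⟩ := (Real.Gamma_eq_zero_iff x).mp hg
    have hg1 : Real.Gamma (x + 1) = 0 := by
      rw [Real.Gamma_eq_zero_iff]
      cases m with
      | zero => exact absurd (by simpa using hm) h
      | succ k => exact ⟨k, by rw [hm]; push_cast; ring⟩
    rw [hg, hg1]; simp
  · have hg1 : Real.Gamma (x + 1) ≠ 0 := by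
      intro h0
      obtain ⟨m, hm⟩ := (Real.Gamma_eq_zero_iff _).mp h0
      apply hg
      rw [Real.Gamma_eq_zero_iff]
      exact ⟨m + 1, by push_cast; linarith⟩
    rw [Real.Gamma_add_one h, mul_inv]
    field_simp

lemma besselNormSummable (μ z : ℝ) (hz : 0 < z) :
    Summable (fun n : ℕ => ‖(-1 : ℝ) ^ n * (z / 2) ^ (2 * (n : ℝ) + μ) /
      ((n.factorial : ℝ) * Real.Gamma ((n : ℝ) + μ + 1))‖) := by
  set x := z / 2 with hxdef
  have hx : 0 < x := by positivity
  obtain ⟨N, hN⟩ := exists_nat_ge (1 - μ)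
  apply Summable.of_norm_bounded_eventually_nat
    (g := fun n => x ^ μ * ((x ^ 2) ^ n / n.factorial))
  · exact (Real.summable_pow_div_factorial (x ^ 2)).mul_left _
  · filter_upwards [Filter.eventually_ge_atTop N] with n hn
    have harg : (2 : ℝ) ≤ (n : ℝ) + μ + 1 := by
      have : (N : ℝ) ≤ (n : ℝ) := by exact_mod_cast hn
      linarith
    have hΓ : 1 ≤ Real.Gamma ((n : ℝ) + μ + 1) := by
      have := (Real.Gamma_strictMonoOn_Ici.monotoneOn (by norm_num : (2:ℝ) ∈ Set.Ici 2)
        (Set.mem_Ici.mpr harg) harg)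
      rwa [Real.Gamma_two] at this
    have hΓpos : 0 < Real.Gamma ((n : ℝ) + μ + 1) := lt_of_lt_of_le one_pos hΓ
    have hpow : x ^ (2 * (n : ℝ) + μ) = (x ^ 2) ^ n * x ^ μ := by
      rw [Real.rpow_add hx]
      congr 1
      rw [show (2 * (n : ℝ)) = ((2 * n : ℕ) : ℝ) by push_cast; ring, Real.rpow_natCast,
        pow_mul]
    rw [norm_norm, norm_div, norm_mul, norm_mul, norm_pow, norm_neg, norm_one, one_pow,
      one_mul]
    rw [Real.norm_eq_abs, Real.norm_eq_abs, Real.norm_eq_abs,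
      abs_of_pos (Real.rpow_pos_of_pos hx _), abs_of_pos hΓpos,
      abs_of_pos (by positivity : (0:ℝ) < (n.factorial : ℝ))]
    rw [hpow]
    rw [div_le_iff₀ (by positivity)]
    have : x ^ μ * ((x ^ 2) ^ n / (n.factorial : ℝ)) * ((n.factorial : ℝ) * Real.Gamma ((n : ℝ) + μ + 1))
        = (x ^ 2) ^ n * x ^ μ * Real.Gamma ((n : ℝ) + μ + 1) := by
      field_simp
    rw [this]
    have hP : 0 < (x ^ 2) ^ n * x ^ μ := by positivity
    have := mul_le_mul_of_nonneg_left hΓ (le_of_lt hP)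
    rw [mul_one] at this
    linarith

lemma besselTerm_eq (μ z : ℝ) (n : ℕ) :
    (-1 : ℝ) ^ n * (z / 2) ^ (2 * (n : ℝ) + μ) /
      ((n.factorial : ℝ) * Real.Gamma ((n : ℝ) + μ + 1))
    = (-1 : ℝ) ^ n * (z / 2) ^ (2 * (n : ℝ) + μ) *
      ((Real.Gamma ((n : ℝ) + 1))⁻¹ * (Real.Gamma ((n : ℝ) + μ + 1))⁻¹) := by
  rw [Real.Gamma_nat_eq_factorial, div_eq_mul_inv, mul_inv]

lemma besselJ_eq (μ z : ℝ) : besselJ μ z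
    = ∑' n : ℕ, (-1 : ℝ) ^ n * (z / 2) ^ (2 * (n : ℝ) + μ) *
      ((Real.Gamma ((n : ℝ) + 1))⁻¹ * (Real.Gamma ((n : ℝ) + μ + 1))⁻¹) := by
  unfold besselJ
  exact tsum_congr fun n => besselTerm_eq μ z n

lemma besselSummable' (μ z : ℝ) (hz : 0 < z) :
    Summable (fun n : ℕ => (-1 : ℝ) ^ n * (z / 2) ^ (2 * (n : ℝ) + μ) /
      ((n.factorial : ℝ) * Real.Gamma ((n : ℝ) + μ + 1))) :=
  (besselNormSummable μ z hz).of_norm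

lemma besselJ_recurrence (μ z : ℝ) (hz : 0 < z) :
    besselJ (μ - 1) z + besselJ (μ + 1) z = 2 * μ / z * besselJ μ z := by
  have hz0 : z ≠ 0 := ne_of_gt hz
  have hx : (0:ℝ) < z / 2 := by positivity
  set f := fun n : ℕ => (-1 : ℝ) ^ n * (z / 2) ^ (2 * (n : ℝ) + (μ - 1)) /
      ((n.factorial : ℝ) * Real.Gamma ((n : ℝ) + (μ - 1) + 1)) with hf
  set g := fun n : ℕ => (-1 : ℝ) ^ n * (z / 2) ^ (2 * (n : ℝ) + (μ + 1)) /
      ((n.factorial : ℝ) * Real.Gamma ((n : ℝ) + (μ + 1) + 1)) with hg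
  set h := fun n : ℕ => 2 * μ / z * ((-1 : ℝ) ^ n * (z / 2) ^ (2 * (n : ℝ) + μ) /
      ((n.factorial : ℝ) * Real.Gamma ((n : ℝ) + μ + 1))) with hh
  have Sf : Summable f := besselSummable' (μ - 1) z hz
  have Sg : Summable g := besselSummable' (μ + 1) z hz
  have Sh : Summable h := (besselSummable' μ z hz).mul_left _
  have hbf : besselJ (μ - 1) z = ∑' n, f n := rfl
  have hbg : besselJ (μ + 1) z = ∑' n, g n := rfl
  have hbh : 2 * μ / z * besselJ μ z = ∑' n, h n := (tsum_mul_left).symm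
  have key : ∀ n : ℕ, h (n + 1) = f (n + 1) + g n := by
    intro n
    simp only [hf, hg, hh, Nat.factorial_succ]
    push_cast
    have e1 : (z / 2) ^ (2 * ((n : ℝ) + 1) + (μ - 1)) = (z / 2) ^ (2 * (n : ℝ) + μ + 1) := by
      congr 1; ring
    have e2 : (z / 2) ^ (2 * ((n : ℝ) + 1) + μ) = (z / 2) ^ (2 * (n : ℝ) + μ + 1) * (z / 2) := by
      rw [show 2*((n:ℝ)+1)+μ = (2*(n:ℝ)+μ+1) + 1 by ring, Real.rpow_add_one (ne_of_gt hx)]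
    have e3 : ((n:ℝ) + 1 + (μ - 1) + 1) = (n:ℝ) + μ + 1 := by ring
    have e4 : ((n:ℝ) + 1 + μ + 1) = (n:ℝ) + μ + 2 := by ring
    have e5 : ((n:ℝ) + (μ + 1) + 1) = (n:ℝ) + μ + 2 := by ring
    rw [e1, e2, e3, e4, e5]
    have e6 : (Real.Gamma ((n:ℝ) + μ + 1))⁻¹ = ((n:ℝ)+μ+1) * (Real.Gamma ((n:ℝ) + μ + 2))⁻¹ := by
      rw [invGamma_rec ((n:ℝ)+μ+1), show (n:ℝ)+μ+1+1 = (n:ℝ)+μ+2 from by ring]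
    simp only [div_eq_mul_inv, mul_inv]
    rw [e6]
    generalize (Real.Gamma ((n:ℝ) + μ + 2))⁻¹ = G
    have hfac : ((n.factorial : ℝ)) ≠ 0 := Nat.cast_ne_zero.mpr n.factorial_ne_zero
    have hn1 : ((n:ℝ) + 1) ≠ 0 := by positivity
    field_simp
    ring
  have hfs : Summable (fun n => f (n + 1)) := (summable_nat_add_iff 1).mpr Sf
  have h0 : h 0 = f 0 := by
    simp only [hf, hh, Nat.cast_zero, pow_zero, Nat.factorial_zero, Nat.cast_one, one_mul,
      mul_zero, zero_add]
    rw [show μ - 1 + 1 = μ by ring]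
    rw [show μ - 1 = μ + (-1) by ring, Real.rpow_add hx, Real.rpow_neg_one]
    simp only [div_eq_mul_inv, mul_inv]
    rw [invGamma_rec μ]
    generalize (Real.Gamma (μ + 1))⁻¹ = G
    field_simp
  calc besselJ (μ - 1) z + besselJ (μ + 1) z
      = (f 0 + ∑' n, f (n + 1)) + ∑' n, g n := by rw [hbf, hbg, Summable.tsum_eq_zero_add Sf]
    _ = h 0 + ∑' n, (f (n + 1) + g n) := by rw [Summable.tsum_add hfs Sg, h0]; ring
    _ = h 0 + ∑' n, h (n + 1) := by rw [tsum_congr fun n => (key n).symm]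
    _ = ∑' n, h n := (Summable.tsum_eq_zero_add Sh).symm
    _ = 2 * μ / z * besselJ μ z := hbh.symm

noncomputable def rG (x : ℝ) : ℝ := (Real.Gamma x)⁻¹

lemma invGamma_rec' (x : ℝ) : (Real.Gamma x)⁻¹ = x * (Real.Gamma (x+1))⁻¹ := invGamma_rec x

lemma rG_rec (x : ℝ) : rG x = x * rG (x+1) := invGamma_rec' x

lemma rG_zero : rG 0 = 0 := by simp [rG, Real.Gamma_zero]

lemma tele_step (a b ν : ℝ) :
    (a + b) * (rG (a+1) * rG (a-ν) * rG (b+1) * rG (b+ν+1)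
      - rG (a+1) * rG (a+1-ν) * rG b * rG (b+ν+1))
    = (-(rG (a+1) * rG (a+1-ν) * rG b * rG (b+ν)))
      - (-(rG a * rG (a-ν) * rG (b+1) * rG (b+ν+1))) := by
  rw [rG_rec a, rG_rec b, rG_rec (a-ν), rG_rec (b+ν),
    show a-ν+1 = a+1-ν by ring, show b+ν+1 = b+1+ν by ring]
  ring_nf

lemma finite_id (ν : ℝ) (n : ℕ) :
    ∑ k ∈ Finset.range (n+2),
      rG ((k:ℝ)+1) * rG ((k:ℝ)-ν) * rG ((n:ℝ)+1-k+1) * rG ((n:ℝ)+1-k+ν+1)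
    = ∑ k ∈ Finset.range (n+1),
      rG ((k:ℝ)+1) * rG ((k:ℝ)+ν+2) * rG ((n:ℝ)-k+1) * rG ((n:ℝ)-k-ν+1) := by
  set N : ℝ := (n:ℝ)+1 with hN
  set tD : ℕ → ℝ := fun k => rG ((k:ℝ)+1) * rG ((k:ℝ)-ν) * rG (N-k+1) * rG (N-k+ν+1)
    with htD
  set u : ℕ → ℝ := fun j => rG ((j:ℝ)+1) * rG ((j:ℝ)+1-ν) * rG (N-j) * rG (N-j+ν+1)
    with hu
  set W : ℕ → ℝ := fun j => -(rG (j:ℝ) * rG ((j:ℝ)-ν) * rG (N-j+1) * rG (N-j+ν+1))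
    with hW
  have key : ∀ j, N * (tD j - u j) = W (j+1) - W j := by
    intro j
    have hts := tele_step (j:ℝ) (N - (j:ℝ)) ν
    rw [show (j:ℝ) + (N - (j:ℝ)) = N by ring] at hts
    simp only [htD, hu, hW]
    push_cast
    rw [show N - ((j:ℝ)+1) + 1 = N - (j:ℝ) by ring,
      show N - ((j:ℝ)+1) + ν + 1 = N - (j:ℝ) + ν by ring]
    exact hts
  have W0 : W 0 = 0 := by
    simp [hW, rG_zero]
  have Wend : W (n+2) = 0 := by
    simp only [hW]
    rw [show N - ((n+2 : ℕ):ℝ) + 1 = 0 by push_cast [hN]; ring]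
    simp [rG_zero]
  have hsum0 : ∑ j ∈ Finset.range (n+2), (tD j - u j) = 0 := by
    have h1 : ∑ j ∈ Finset.range (n+2), (W (j+1) - W j) = W (n+2) - W 0 :=
      Finset.sum_range_sub W (n+2)
    rw [Wend, W0, sub_zero] at h1
    have h2 : N * ∑ j ∈ Finset.range (n+2), (tD j - u j) = 0 := by
      rw [Finset.mul_sum]
      rw [Finset.sum_congr rfl (fun j _ => key j)]
      exact h1
    have hNne : N ≠ 0 := by positivity
    exact (mul_eq_zero.mp h2).resolve_left hNne
  have hDu : ∑ j ∈ Finset.range (n+2), tD j = ∑ j ∈ Finset.range (n+2), u j := by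
    have := Finset.sum_sub_distrib (f := tD) (g := u) (s := Finset.range (n+2))
    rw [this] at hsum0
    linarith
  have hulast : u (n+1) = 0 := by
    simp only [hu]
    rw [show N - ((n+1 : ℕ):ℝ) = 0 by push_cast [hN]; ring]
    simp [rG_zero]
  have hrefl : ∑ j ∈ Finset.range (n+1), u j
      = ∑ k ∈ Finset.range (n+1),
        rG ((k:ℝ)+1) * rG ((k:ℝ)+ν+2) * rG ((n:ℝ)-k+1) * rG ((n:ℝ)-k-ν+1) := by
    rw [← Finset.sum_range_reflect
      (fun k => rG ((k:ℝ)+1) * rG ((k:ℝ)+ν+2) * rG ((n:ℝ)-k+1) * rG ((n:ℝ)-k-ν+1)) (n+1)]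
    apply Finset.sum_congr rfl
    intro j hj
    have hj' : j ≤ n := Nat.lt_succ_iff.mp (Finset.mem_range.mp hj)
    simp only [hu, Nat.add_sub_cancel]
    rw [Nat.cast_sub hj']
    rw [show (n:ℝ) - ((n:ℝ) - (j:ℝ)) + 1 = (j:ℝ)+1 by ring,
      show (n:ℝ) - ((n:ℝ) - (j:ℝ)) - ν + 1 = (j:ℝ)+1-ν by ring,
      show (n:ℝ) - (j:ℝ) + 1 = N - (j:ℝ) by rw [hN]; ring,
      show (n:ℝ) - (j:ℝ) + ν + 2 = N - (j:ℝ) + ν + 1 by rw [hN]; ring]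
    ring
  calc ∑ j ∈ Finset.range (n+2), tD j = ∑ j ∈ Finset.range (n+2), u j := hDu
    _ = ∑ j ∈ Finset.range (n+1), u j + u (n+1) := Finset.sum_range_succ u (n+1)
    _ = ∑ j ∈ Finset.range (n+1), u j := by rw [hulast, add_zero]
    _ = _ := hrefl

noncomputable def bterm (μ z : ℝ) (n : ℕ) : ℝ :=
  (-1 : ℝ) ^ n * (z / 2) ^ (2 * (n : ℝ) + μ) /
    ((n.factorial : ℝ) * Real.Gamma ((n : ℝ) + μ + 1))

lemma besselNormSummable' (μ z : ℝ) (hz : 0 < z) :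
    Summable (fun n : ℕ => ‖bterm μ z n‖) := besselNormSummable μ z hz

lemma rG_one : rG 1 = 1 := by simp [rG, Real.Gamma_one]

lemma bterm_rG (μ z : ℝ) (n : ℕ) :
    bterm μ z n = (-1 : ℝ) ^ n * (z / 2) ^ (2 * (n : ℝ) + μ) *
      (rG ((n : ℝ) + 1) * rG ((n : ℝ) + μ + 1)) := by
  rw [bterm, rG, rG, Real.Gamma_nat_eq_factorial, div_eq_mul_inv, mul_inv]

lemma besselJ_bterm (μ z : ℝ) : besselJ μ z = ∑' n, bterm μ z n := rfl

lemma besselJ_lommel (ν z : ℝ) (hz : 0 < z) :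
    besselJ (ν+1) z * besselJ (-ν) z + besselJ (-ν-1) z * besselJ ν z
      = -(2 * Real.sin (π * ν)) / (π * z) := by
  have hz0 : z ≠ 0 := ne_of_gt hz
  have hx : (0:ℝ) < z/2 := by positivity
  have Na := besselNormSummable' (ν+1) z hz
  have Nb := besselNormSummable' (-ν) z hz
  have Na' := besselNormSummable' (-ν-1) z hz
  have Nb' := besselNormSummable' ν z hz
  set P := fun n : ℕ => ∑ k ∈ Finset.range (n+1), bterm (ν+1) z k * bterm (-ν) z (n-k)
    with hP
  set Q := fun n : ℕ => ∑ k ∈ Finset.range (n+1), bterm (-ν-1) z k * bterm ν z (n-k)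
    with hQ
  have hPsum : besselJ (ν+1) z * besselJ (-ν) z = ∑' n, P n := by
    rw [besselJ_bterm, besselJ_bterm]
    exact tsum_mul_tsum_eq_tsum_sum_range_of_summable_norm Na Nb
  have hQsum : besselJ (-ν-1) z * besselJ ν z = ∑' n, Q n := by
    rw [besselJ_bterm, besselJ_bterm]
    exact tsum_mul_tsum_eq_tsum_sum_range_of_summable_norm Na' Nb'
  have SP : Summable P := (summable_norm_sum_mul_range_of_summable_norm Na Nb).of_norm
  have SQ : Summable Q := (summable_norm_sum_mul_range_of_summable_norm Na' Nb').of_norm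
  have hPn : ∀ n : ℕ, P n = (-1)^n * (z/2)^(2*(n:ℝ)+1) *
      ∑ k ∈ Finset.range (n+1),
        rG ((k:ℝ)+1) * rG ((k:ℝ)+ν+2) * rG ((n:ℝ)-k+1) * rG ((n:ℝ)-k-ν+1) := by
    intro n
    rw [hP, Finset.mul_sum]
    apply Finset.sum_congr rfl
    intro k hk
    have hk' : k ≤ n := Nat.lt_succ_iff.mp (Finset.mem_range.mp hk)
    rw [bterm_rG, bterm_rG, Nat.cast_sub hk']
    have hsign : ((-1:ℝ))^k * (-1)^(n-k) = (-1)^n := by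
      rw [← pow_add]; congr 1; omega
    have hxp : (z/2)^(2*(k:ℝ)+(ν+1)) * (z/2)^(2*((n:ℝ)-(k:ℝ))+(-ν)) = (z/2)^(2*(n:ℝ)+1) := by
      rw [← Real.rpow_add hx]; congr 1; ring
    have expand : (-1:ℝ)^k * (z/2)^(2*(k:ℝ)+(ν+1)) * (rG ((k:ℝ)+1) * rG ((k:ℝ)+(ν+1)+1)) *
        ((-1:ℝ)^(n-k) * (z/2)^(2*((n:ℝ)-(k:ℝ))+(-ν)) *
          (rG ((n:ℝ)-(k:ℝ)+1) * rG ((n:ℝ)-(k:ℝ)+(-ν)+1)))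
        = ((-1:ℝ)^k * (-1)^(n-k)) *
          ((z/2)^(2*(k:ℝ)+(ν+1)) * (z/2)^(2*((n:ℝ)-(k:ℝ))+(-ν))) *
          (rG ((k:ℝ)+1) * rG ((k:ℝ)+(ν+1)+1) * rG ((n:ℝ)-(k:ℝ)+1)
            * rG ((n:ℝ)-(k:ℝ)+(-ν)+1)) := by ring
    rw [expand, hsign, hxp,
      show (k:ℝ)+(ν+1)+1 = (k:ℝ)+ν+2 by ring,
      show (n:ℝ)-(k:ℝ)+(-ν)+1 = (n:ℝ)-(k:ℝ)-ν+1 by ring]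
  have hQn : ∀ n : ℕ, Q n = (-1)^n * (z/2)^(2*(n:ℝ)-1) *
      ∑ k ∈ Finset.range (n+1),
        rG ((k:ℝ)+1) * rG ((k:ℝ)-ν) * rG ((n:ℝ)-k+1) * rG ((n:ℝ)-k+ν+1) := by
    intro n
    rw [hQ, Finset.mul_sum]
    apply Finset.sum_congr rfl
    intro k hk
    have hk' : k ≤ n := Nat.lt_succ_iff.mp (Finset.mem_range.mp hk)
    rw [bterm_rG, bterm_rG, Nat.cast_sub hk']
    have hsign : ((-1:ℝ))^k * (-1)^(n-k) = (-1)^n := by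
      rw [← pow_add]; congr 1; omega
    have hxp : (z/2)^(2*(k:ℝ)+(-ν-1)) * (z/2)^(2*((n:ℝ)-(k:ℝ))+ν) = (z/2)^(2*(n:ℝ)-1) := by
      rw [← Real.rpow_add hx]; congr 1; ring
    have expand : (-1:ℝ)^k * (z/2)^(2*(k:ℝ)+(-ν-1)) * (rG ((k:ℝ)+1) * rG ((k:ℝ)+(-ν-1)+1)) *
        ((-1:ℝ)^(n-k) * (z/2)^(2*((n:ℝ)-(k:ℝ))+ν) *
          (rG ((n:ℝ)-(k:ℝ)+1) * rG ((n:ℝ)-(k:ℝ)+ν+1)))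
        = ((-1:ℝ)^k * (-1)^(n-k)) *
          ((z/2)^(2*(k:ℝ)+(-ν-1)) * (z/2)^(2*((n:ℝ)-(k:ℝ))+ν)) *
          (rG ((k:ℝ)+1) * rG ((k:ℝ)+(-ν-1)+1) * rG ((n:ℝ)-(k:ℝ)+1)
            * rG ((n:ℝ)-(k:ℝ)+ν+1)) := by ring
    rw [expand, hsign, hxp, show (k:ℝ)+(-ν-1)+1 = (k:ℝ)-ν by ring]
  have keyQ : ∀ n : ℕ, Q (n+1) = -P n := by
    intro n
    rw [hQn (n+1), hPn n]
    push_cast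
    rw [show 2*((n:ℝ)+1)-1 = 2*(n:ℝ)+1 by ring]
    rw [show n+1+1 = n+2 from rfl]
    rw [finite_id ν n]
    ring
  have htQ : ∑' n, Q n = Q 0 + ∑' n, Q (n+1) := Summable.tsum_eq_zero_add SQ
  have hQ0 : Q 0 = -(2 * Real.sin (π * ν)) / (π * z) := by
    have : Q 0 = bterm (-ν-1) z 0 * bterm ν z 0 := by
      rw [hQ]; simp
    rw [this, bterm_rG, bterm_rG]
    norm_num
    rw [rG_one]
    rw [show (z/2)^(-ν-1) * (1 * rG (-ν)) * ((z/2)^ν * (1 * rG (ν+1)))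
        = ((z/2)^(-ν-1) * (z/2)^ν) * (rG (-ν) * rG (ν+1)) by ring,
      ← Real.rpow_add hx, show -ν-1+ν = -1 by ring, Real.rpow_neg_one]
    have hrefl : rG (-ν) * rG (ν+1) = -Real.sin (π*ν) / π := by
      rw [rG, rG, ← mul_inv]
      rw [show Real.Gamma (ν+1) = Real.Gamma (1 - (-ν)) by congr 1; ring]
      rw [Real.Gamma_mul_Gamma_one_sub (-ν)]
      rw [show π * -ν = -(π*ν) by ring, Real.sin_neg]
      rw [inv_div]
    rw [hrefl]
    field_simp
  rw [hPsum, hQsum, htQ, tsum_congr keyQ, tsum_neg, hQ0]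
  ring

/-- `J_{ν+3}(z) J_{-ν}(z) + J_{-(ν+3)}(z) J_ν(z) = 2(z² - 4(ν+1)(ν+2)) sin(νπ)/(πz³)`. -/
theorem bessel_lommel_p2 (z ν : ℝ) (hz : 0 < z) (hν : ∀ m : ℤ, ν ≠ (m : ℝ)) :
    besselJ (ν + 3) z * besselJ (-ν) z + besselJ (-(ν + 3)) z * besselJ ν z =
      2 * (z ^ 2 - 4 * (ν + 1) * (ν + 2)) * Real.sin (ν * π) / (π * z ^ 3) := by
  have hz0 : z ≠ 0 := ne_of_gt hz
  have hπ : π ≠ 0 := Real.pi_ne_zero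
  have e1 := besselJ_recurrence (ν+1) z hz
  have e2 := besselJ_recurrence (ν+2) z hz
  have e3 := besselJ_recurrence (-ν-1) z hz
  have e4 := besselJ_recurrence (-ν-2) z hz
  have e5 := besselJ_lommel ν z hz
  rw [show ν+1-1 = ν by ring, show ν+1+1 = ν+2 by ring] at e1
  rw [show ν+2-1 = ν+1 by ring, show ν+2+1 = ν+3 by ring] at e2
  rw [show -ν-1-1 = -ν-2 by ring, show -ν-1+1 = -ν by ring] at e3
  rw [show -ν-2-1 = -ν-3 by ring, show -ν-2+1 = -ν-1 by ring] at e4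
  rw [show -(ν+3) = -ν-3 by ring, show Real.sin (ν*π) = Real.sin (π*ν) by rw [mul_comm]]
  set A0 := besselJ ν z with hA0d
  set A1 := besselJ (ν+1) z with hA1d
  set A2 := besselJ (ν+2) z with hA2d
  set A3 := besselJ (ν+3) z with hA3d
  set B0 := besselJ (-ν) z with hB0d
  set B1 := besselJ (-ν-1) z with hB1d
  set B2 := besselJ (-ν-2) z with hB2d
  set B3 := besselJ (-ν-3) z with hB3d
  have hA3 : A3 = 2*(ν+2)/z*A2 - A1 := by linarith
  have hB3 : B3 = 2*(-ν-2)/z*B2 - B1 := by linarith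
  have hA2 : A2 = 2*(ν+1)/z*A1 - A0 := by linarith
  have hB2 : B2 = 2*(-ν-1)/z*B1 - B0 := by linarith
  have hkey : A3*B0 + B3*A0 = (4*(ν+1)*(ν+2)/z^2 - 1) * (A1*B0 + B1*A0) := by
    rw [hA3, hB3, hA2, hB2]
    field_simp
    ring
  rw [hkey, e5]
  field_simp
  ring
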